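/- Let F ∈ ℂ[X,Y] be such that the complex curve V(F) contains no vertical line (equivalently, the coefficients of F as a polynomial in Y have no common nonconstant factor in ℂ[X]), and assume deg_Y F(z,·) = deg_Y F for the given z ∈ ℂ. Then ∑_{z' : F(z,z')=0 and ∂_Y F(z,z')=0} (mult(z', F(z,Y)) − 1) ≤ mult(z, Disc_Y(F)), where Disc_Y(F) ∈ ℂ[X] is the discriminant of F with respect to Y. -/

import Mathlib

open Polynomial

/-- The Sylvester matrix of two polynomials f, g of respective degrees p, q. -/
def sylvester {A : Type*} [CommRing A] (f g : Polynomial A) (p q : ℕ) :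
    Matrix (Fin (q + p)) (Fin (q + p)) A :=
  Matrix.of fun i j =>
    if (j : ℕ) < q then
      (if (i : ℕ) ≤ p + j then f.coeff (p + (j : ℕ) - i) else 0)
    else
      (if (i : ℕ) ≤ j then g.coeff ((j : ℕ) - i) else 0)

/-- The resultant of two polynomials f, g of respective degrees p, q. -/
noncomputable def resultantOf {A : Type*} [CommRing A] (f g : Polynomial A) (p q : ℕ) : A :=
  (_root_.sylvester f g p q).det

open Finset in
private 
lemma conv_sum {A : Type*} [CommRing A] (h c : A[X]) (P Q i : ℕ) (hi : i < P + Q)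
    (hc : ∀ r, Q ≤ r → c.coeff r = 0) :
    ∑ t ∈ Finset.range Q, (if i ≤ P + t then h.coeff (P + t - i) else 0) * c.coeff (Q - 1 - t)
      = (c * h).coeff (P + Q - 1 - i) := by
  set d := P + Q - 1 - i with hd
  have L : ∑ t ∈ Finset.range Q, (if i ≤ P + t then h.coeff (P + t - i) else 0) * c.coeff (Q - 1 - t)
      = ∑ r ∈ range Q, c.coeff r * (if r ≤ d ∧ r < Q then h.coeff (d - r) else 0) := by
    have step : ∑ t ∈ Finset.range Q, (if i ≤ P + t then h.coeff (P + t - i) else 0) * c.coeff (Q - 1 - t)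
        = ∑ t ∈ Finset.range Q, (fun r => c.coeff r * (if r ≤ d ∧ r < Q then h.coeff (d - r) else 0)) (Q - 1 - t) := by
      refine Finset.sum_congr rfl fun t ht => ?_
      simp only [Finset.mem_range] at ht
      rw [mul_comm]
      congr 1
      have h1 : (Q - 1 - t ≤ d ∧ Q - 1 - t < Q) ↔ i ≤ P + t := by omega
      rcases le_or_gt i (P + t) with hle | hlt
      · rw [if_pos hle, if_pos (h1.mpr hle)]
        congr 1
        omega
      · rw [if_neg (by omega), if_neg (by rw [h1]; omega)]
    exact step.trans (Finset.sum_range_reflect (fun r => c.coeff r * if r ≤ d ∧ r < Q then h.coeff (d - r) else 0) Q)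
  have R : (c * h).coeff d = ∑ r ∈ range (d+1), c.coeff r * (if r ≤ d ∧ r < Q then h.coeff (d - r) else 0) := by
    rw [coeff_mul, Finset.Nat.sum_antidiagonal_eq_sum_range_succ_mk]
    refine Finset.sum_congr rfl fun r hr => ?_
    simp only [Finset.mem_range] at hr
    rcases lt_or_ge r Q with hrQ | hrQ
    · rw [if_pos ⟨by omega, hrQ⟩]
    · rw [hc r hrQ, zero_mul, zero_mul]
  rw [L, R]
  rcases le_total Q (d+1) with hQd | hQd
  · refine Finset.sum_subset (Finset.range_subset_range.mpr hQd) fun r _ hr => ?_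
    simp only [Finset.mem_range, not_lt] at hr
    rw [hc r hr, zero_mul]
  · refine (Finset.sum_subset (Finset.range_subset_range.mpr hQd) fun r _ hr => ?_).symm
    simp only [Finset.mem_range, not_lt] at hr
    rw [if_neg (by omega), mul_zero]

open Finset in
private lemma sylvester_mulVec {A : Type*} [CommRing A] (f g a b : A[X]) (p q : ℕ)
    (ha : ∀ r, q ≤ r → a.coeff r = 0) (hb : ∀ r, p ≤ r → b.coeff r = 0) (i : Fin (q + p)) :
    (_root_.sylvester f g p q).mulVec
      (fun j => if (j : ℕ) < q then a.coeff (q - 1 - (j : ℕ)) else b.coeff (q + p - 1 - (j : ℕ))) i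
      = (a * f + b * g).coeff (q + p - 1 - (i : ℕ)) := by
  have expand : (_root_.sylvester f g p q).mulVec
      (fun j => if (j : ℕ) < q then a.coeff (q - 1 - (j : ℕ)) else b.coeff (q + p - 1 - (j : ℕ))) i
    = ∑ jn ∈ Finset.range (q + p),
        (if jn < q then (if (i : ℕ) ≤ p + jn then f.coeff (p + jn - (i : ℕ)) else 0) * a.coeff (q - 1 - jn)
         else (if (i : ℕ) ≤ jn then g.coeff (jn - (i : ℕ)) else 0) * b.coeff (q + p - 1 - jn)) := by
    rw [← Fin.sum_univ_eq_sum_range]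
    simp only [Matrix.mulVec, dotProduct]
    refine Finset.sum_congr rfl fun j _ => ?_
    by_cases hj : (j : ℕ) < q <;> simp [_root_.sylvester, hj]
  rw [expand, Finset.sum_range_add]
  have e1 : ∑ jn ∈ Finset.range q,
      (if jn < q then (if (i : ℕ) ≤ p + jn then f.coeff (p + jn - (i : ℕ)) else 0) * a.coeff (q - 1 - jn)
       else (if (i : ℕ) ≤ jn then g.coeff (jn - (i : ℕ)) else 0) * b.coeff (q + p - 1 - jn))
      = (a * f).coeff (q + p - 1 - (i : ℕ)) := by
    have := conv_sum f a p q (i : ℕ) (by have := i.2; omega) ha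
    rw [← show p + q - 1 - (i : ℕ) = q + p - 1 - (i : ℕ) by omega, ← this]
    refine Finset.sum_congr rfl fun t ht => ?_
    simp only [Finset.mem_range] at ht
    rw [if_pos ht]
  have e2 : ∑ jn ∈ Finset.range p,
      (if q + jn < q then (if (i : ℕ) ≤ p + (q + jn) then f.coeff (p + (q + jn) - (i : ℕ)) else 0) * a.coeff (q - 1 - (q + jn))
       else (if (i : ℕ) ≤ q + jn then g.coeff (q + jn - (i : ℕ)) else 0) * b.coeff (q + p - 1 - (q + jn)))
      = (b * g).coeff (q + p - 1 - (i : ℕ)) := by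
    have := conv_sum g b q p (i : ℕ) (by have := i.2; omega) hb
    rw [← this]
    refine Finset.sum_congr rfl fun t ht => ?_
    simp only [Finset.mem_range] at ht
    rw [if_neg (by omega), show q + p - 1 - (q + t) = p - 1 - t by omega]
  rw [e1, e2, coeff_add]

open Finset in
private lemma det_dvd_of_kernel {N m : ℕ} (hm : m ≤ N) (M : Matrix (Fin N) (Fin N) (Polynomial ℂ))
    (z : ℂ) (v : Fin m → Fin N → ℂ)
    (hker : ∀ k, (M.map (evalRingHom z)).mulVec (v k) = 0)
    (hpiv : ∀ j : Fin m, v j ⟨(j : ℕ), lt_of_lt_of_le j.2 hm⟩ ≠ 0)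
    (hzero : ∀ j : Fin m, ∀ i : Fin N, (i : ℕ) < (j : ℕ) → v j i = 0) :
    (X - C z) ^ m ∣ M.det := by
  classical
  set P : Matrix (Fin N) (Fin N) ℂ := Matrix.of fun i j =>
    if h : (j : ℕ) < m then v ⟨(j : ℕ), h⟩ i else if i = j then 1 else 0 with hP
  have hPtri : P.transpose.BlockTriangular id := by
    intro i j hij
    simp only [Matrix.transpose_apply, hP, Matrix.of_apply]
    by_cases h : (i : ℕ) < m
    · rw [dif_pos h]
      exact hzero ⟨(i : ℕ), h⟩ j hij
    · rw [dif_neg h, if_neg (by exact fun hc => absurd hc (by intro hc; exact absurd (hc ▸ hij) (lt_irrefl _)))]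
  have hPdiag : ∀ i : Fin N, P i i ≠ 0 := by
    intro i
    simp only [hP, Matrix.of_apply]
    by_cases h : (i : ℕ) < m
    · rw [dif_pos h]
      exact hpiv ⟨(i : ℕ), h⟩
    · simp [dif_neg h]
  have hPdet : P.det ≠ 0 := by
    rw [← Matrix.det_transpose, Matrix.det_of_upperTriangular hPtri]
    exact Finset.prod_ne_zero_iff.mpr fun i _ => by
      simpa using hPdiag i
  set MP := M * P.map (C : ℂ →+* ℂ[X]) with hMP
  have hdvd : ∀ (i : Fin N) (j : Fin N), (j : ℕ) < m → (X - C z) ∣ MP i j := by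
    intro i j hj
    rw [dvd_iff_isRoot]
    have : eval z (MP i j) = ((M.map (evalRingHom z)).mulVec (v ⟨(j : ℕ), hj⟩)) i := by
      simp only [hMP, Matrix.mul_apply, Matrix.mulVec, dotProduct, eval_finset_sum,
        eval_mul, Matrix.map_apply, eval_C, coe_evalRingHom]
      refine Finset.sum_congr rfl fun k _ => ?_
      simp [hP]
      rw [dif_pos hj]
    simpa [IsRoot, this] using congrFun (hker ⟨(j : ℕ), hj⟩) i
  set Q : Matrix (Fin N) (Fin N) (Polynomial ℂ) := Matrix.of fun i j =>
    if h : (j : ℕ) < m then (hdvd i j h).choose else MP i j with hQ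
  have hfact : MP = Q * Matrix.diagonal (fun j : Fin N => if (j : ℕ) < m then X - C z else 1) := by
    refine Matrix.ext fun i j => ?_
    rw [Matrix.mul_diagonal]
    by_cases h : (j : ℕ) < m
    · rw [if_pos h]
      simp only [hQ, Matrix.of_apply, dif_pos h]
      rw [mul_comm]
      exact (hdvd i j h).choose_spec
    · rw [if_neg h]
      simp only [hQ, Matrix.of_apply, dif_neg h, mul_one]
  have hprod : (∏ j : Fin N, (if (j : ℕ) < m then X - C z else (1 : ℂ[X]))) = (X - C z) ^ m := by
    rw [Fin.prod_univ_eq_prod_range (fun j => if j < m then X - C z else (1 : ℂ[X])) N]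
    rw [← Finset.prod_range_mul_prod_Ico _ hm]
    rw [Finset.prod_congr rfl (fun x hx => if_pos (Finset.mem_range.mp hx)),
      Finset.prod_const, Finset.card_range]
    rw [Finset.prod_congr rfl (fun x hx => if_neg (by simp only [Finset.mem_Ico] at hx; omega)),
      Finset.prod_const_one, mul_one]
  have hdetMP : MP.det = Q.det * (X - C z) ^ m := by
    rw [hfact, Matrix.det_mul, Matrix.det_diagonal, hprod]
  have : MP.det = M.det * C P.det := by
    rw [hMP, Matrix.det_mul, ← RingHom.mapMatrix_apply, ← RingHom.map_det]
  have hdvd2 : (X - C z) ^ m ∣ M.det * C P.det := by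
    rw [← this, hdetMP]; exact Dvd.intro_left _ rfl
  have hu : IsUnit (C P.det) := isUnit_C.mpr (isUnit_iff_ne_zero.mpr hPdet)
  exact (hu.dvd_mul_right).mp hdvd2

open Finset in
private lemma sylvester_map {S : Type*} [CommRing S] (φ : Polynomial ℂ →+* S)
    (F G : Polynomial (Polynomial ℂ)) (p q : ℕ) :
    (_root_.sylvester F G p q).map φ = _root_.sylvester (F.map φ) (G.map φ) p q := by
  refine Matrix.ext fun i j => ?_
  simp only [_root_.sylvester, Matrix.map_apply, Matrix.of_apply, coeff_map]
  split_ifs <;> simp [coeff_map]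

/-- Let F ∈ ℂ[X][Y] be such that V_ℂ(F) contains no vertical line, let
Disc_Y(F) ∈ ℂ[X] be the discriminant of F in Y (lc_Y(F)·Disc_Y(F) = Res_Y(F,∂_Y F),
nonzero), and let z ∈ ℂ be such that deg_Y F(z,·) = deg_Y F.  Then
∑_{z' : F(z,z') = ∂_Y F(z,z') = 0} (mult(z', F(z,Y)) − 1) ≤ mult(z, Disc_Y(F)). -/
theorem sum_mult_sub_one_le_mult_disc
    (F : Polynomial (Polynomial ℂ)) (n : ℕ) (hn : F.natDegree = n) (hn1 : 1 ≤ n)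
    (hnovert : ∀ d : Polynomial ℂ, (∀ i, d ∣ F.coeff i) → IsUnit d)
    (D : Polynomial ℂ) (hD : F.leadingCoeff * D = resultantOf F (derivative F) n (n - 1))
    (hD0 : D ≠ 0)
    (z : ℂ) (hlc : (F.leadingCoeff).eval z ≠ 0) :
    ∑ z' ∈ (F.map (evalRingHom z)).roots.toFinset.filter
        (fun z' => ((derivative F).map (evalRingHom z)).eval z' = 0),
      ((F.map (evalRingHom z)).rootMultiplicity z' - 1) ≤
      D.rootMultiplicity z := by
  classical
  set e := evalRingHom z with he
  set f : ℂ[X] := F.map e with hf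
  have hlce : e F.leadingCoeff ≠ 0 := hlc
  have hfdeg : f.natDegree = n := by
    rw [hf, natDegree_map_of_leadingCoeff_ne_zero e hlce, hn]
  have hf0 : f ≠ 0 := fun h => by simp [h] at hfdeg; omega
  set f' : ℂ[X] := derivative f with hf'
  have hf'c : f'.coeff (n - 1) = f.coeff n * n := by
    rw [hf', coeff_derivative, show n - 1 + 1 = n by omega, Nat.cast_sub hn1]
    push_cast
    ring
  have hcn : f.coeff n ≠ 0 := by
    rw [← hfdeg, coeff_natDegree]
    exact leadingCoeff_ne_zero.mpr hf0
  have hf'c0 : f'.coeff (n - 1) ≠ 0 := by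
    rw [hf'c]
    exact mul_ne_zero hcn (Nat.cast_ne_zero.mpr (by omega))
  have hf'0 : f' ≠ 0 := fun h => hf'c0 (by simp [h])
  have hf'deg : f'.natDegree = n - 1 := by
    refine le_antisymm ?_ (le_natDegree_of_ne_zero hf'c0)
    calc f'.natDegree ≤ f.natDegree - 1 := natDegree_derivative_le f
    _ = n - 1 := by rw [hfdeg]
  set R := f.roots.toFinset with hR
  set μ : ℂ → ℕ := fun z' => f.rootMultiplicity z' with hμ
  set g : ℂ[X] := ∏ z' ∈ R, (X - C z') ^ (μ z' - 1) with hg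
  have hgmonic : g.Monic := monic_prod_of_monic _ _ fun z' _ => (monic_X_sub_C z').pow _
  have hg0 : g ≠ 0 := hgmonic.ne_zero
  have hgdeg : g.natDegree = ∑ z' ∈ R, (μ z' - 1) := by
    rw [hg, natDegree_prod _ _ fun z' _ => pow_ne_zero _ (X_sub_C_ne_zero z')]
    exact Finset.sum_congr rfl fun z' _ => by
      rw [natDegree_pow, natDegree_X_sub_C, mul_one]
  have hpair : (R : Set ℂ).Pairwise (Function.onFun IsCoprime fun z' => (X - C z') ^ (μ z' - 1)) := by
    intro x _ y _ hxy
    exact (Polynomial.pairwise_coprime_X_sub_C (Function.injective_id) hxy).pow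
  have hgf : g ∣ f := by
    refine Finset.prod_dvd_of_coprime hpair fun z' _ => ?_
    exact dvd_trans (pow_dvd_pow _ (Nat.sub_le _ _)) (pow_rootMultiplicity_dvd f z')
  have hgf' : g ∣ f' := by
    refine Finset.prod_dvd_of_coprime hpair fun z' hz' => ?_
    have hroot : f.IsRoot z' := by
      have := Multiset.mem_toFinset.mp hz'
      exact (mem_roots'.mp this).2
    have := derivative_rootMultiplicity_of_root hroot
    rw [show μ z' - 1 = f'.rootMultiplicity z' from this.symm]
    exact pow_rootMultiplicity_dvd f' z'
  set m := g.natDegree with hm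
  have hmq : m ≤ n - 1 := hf'deg ▸ natDegree_le_of_dvd hgf' hf'0
  -- division
  set B := f /ₘ g with hB
  set A := f' /ₘ g with hA
  have hfB : f = g * B := by
    have := modByMonic_add_div f g
    rw [(modByMonic_eq_zero_iff_dvd hgmonic).mpr hgf] at this
    linear_combination -this
  have hf'A : f' = g * A := by
    have := modByMonic_add_div f' g
    rw [(modByMonic_eq_zero_iff_dvd hgmonic).mpr hgf'] at this
    linear_combination -this
  have hA0 : A ≠ 0 := fun h => hf'0 (by rw [hf'A, h, mul_zero])
  have hB0 : B ≠ 0 := fun h => hf0 (by rw [hfB, h, mul_zero])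
  have hAdeg : A.natDegree = n - 1 - m := by
    have := natDegree_mul (p := g) (q := A) hg0 hA0
    rw [← hf'A, hf'deg] at this
    omega
  have hBdeg : B.natDegree = n - m := by
    have := natDegree_mul (p := g) (q := B) hg0 hB0
    rw [← hfB, hfdeg] at this
    have : n = m + B.natDegree := this
    have hmn : m ≤ n := by omega
    omega
  -- the kernel vectors
  set q : ℕ := n - 1 with hq
  set p : ℕ := n with hp
  set v : Fin m → Fin (q + p) → ℂ := fun j i =>
    if (i : ℕ) < q then (X ^ (m - 1 - (j : ℕ)) * A).coeff (q - 1 - (i : ℕ))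
    else (-(X ^ (m - 1 - (j : ℕ)) * B)).coeff (q + p - 1 - (i : ℕ)) with hv
  have hmN : m ≤ q + p := by omega
  have hadeg : ∀ j : Fin m, (X ^ (m - 1 - (j : ℕ)) * A).natDegree = q - 1 - (j : ℕ) := by
    intro j
    rw [natDegree_X_pow_mul (p := A) (n := m - 1 - (j : ℕ)) hA0, hAdeg]
    have := j.2
    omega
  have hbdeg : ∀ j : Fin m, (X ^ (m - 1 - (j : ℕ)) * B).natDegree = p - 1 - (j : ℕ) := by
    intro j
    rw [natDegree_X_pow_mul (p := B) (n := m - 1 - (j : ℕ)) hB0, hBdeg]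
    have := j.2
    omega
  have hker : ∀ k, ((_root_.sylvester F (derivative F) n (n-1)).map (evalRingHom z)).mulVec (v k) = 0 := by
    intro k
    have hderiv : Polynomial.map (evalRingHom z) (derivative F) = f' := by
      rw [hf', hf]
      exact (derivative_map F e).symm
    have hmap : (_root_.sylvester F (derivative F) n (n-1)).map (⇑(evalRingHom z))
        = _root_.sylvester f f' p q := by
      rw [sylvester_map (evalRingHom z) F (derivative F) n (n-1), hderiv]
    funext i
    rw [hmap]
    have ha : ∀ r, q ≤ r → (X ^ (m - 1 - (k : ℕ)) * A).coeff r = 0 := by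
      intro r hr
      apply coeff_eq_zero_of_natDegree_lt
      rw [hadeg k]
      have := k.2
      omega
    have hb : ∀ r, p ≤ r → (-(X ^ (m - 1 - (k : ℕ)) * B)).coeff r = 0 := by
      intro r hr
      rw [coeff_neg]
      rw [coeff_eq_zero_of_natDegree_lt, neg_zero]
      rw [hbdeg k]
      have := k.2
      omega
    have := sylvester_mulVec f f' (X ^ (m - 1 - (k : ℕ)) * A) (-(X ^ (m - 1 - (k : ℕ)) * B))
      p q ha hb i
    rw [show (X ^ (m - 1 - (k : ℕ)) * A) * f + (-(X ^ (m - 1 - (k : ℕ)) * B)) * f' = 0 by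
        rw [hfB, hf'A]; ring] at this
    rw [Pi.zero_apply, ← coeff_zero (q + p - 1 - (i : ℕ)), ← this]
  have hpiv : ∀ j : Fin m, v j ⟨(j : ℕ), lt_of_lt_of_le j.2 hmN⟩ ≠ 0 := by
    intro j
    have hjq : (j : ℕ) < q := by have := j.2; omega
    rw [hv]
    simp only [hjq, if_pos]
    rw [show q - 1 - (j : ℕ) = (X ^ (m - 1 - (j : ℕ)) * A).natDegree from (hadeg j).symm,
      coeff_natDegree]
    exact leadingCoeff_ne_zero.mpr (mul_ne_zero (pow_ne_zero _ X_ne_zero) hA0)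
  have hzero : ∀ j : Fin m, ∀ i : Fin (q + p), (i : ℕ) < (j : ℕ) → v j i = 0 := by
    intro j i hij
    have hiq : (i : ℕ) < q := by have := j.2; omega
    rw [hv]
    simp only [hiq, if_pos]
    apply coeff_eq_zero_of_natDegree_lt
    rw [hadeg j]
    have := j.2
    omega
  have hdvdres : (X - C z) ^ m ∣ resultantOf F (derivative F) n (n - 1) :=
    det_dvd_of_kernel hmN (_root_.sylvester F (derivative F) n (n-1)) z v hker hpiv hzero
  rw [← hD] at hdvdres
  have hlc0 : F.leadingCoeff ≠ 0 := fun h => hlc (by rw [h]; simp)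
  have hprod0 : F.leadingCoeff * D ≠ 0 := mul_ne_zero hlc0 hD0
  have hmle : m ≤ (F.leadingCoeff * D).rootMultiplicity z :=
    (le_rootMultiplicity_iff hprod0).mpr hdvdres
  rw [rootMultiplicity_mul hprod0,
    rootMultiplicity_eq_zero (fun h => hlc h), zero_add] at hmle
  -- conclude
  calc ∑ z' ∈ R.filter (fun z' => ((derivative F).map (evalRingHom z)).eval z' = 0), (μ z' - 1)
      ≤ ∑ z' ∈ R, (μ z' - 1) :=
        Finset.sum_le_sum_of_subset (Finset.filter_subset _ _)
    _ = m := hgdeg.symm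
    _ ≤ D.rootMultiplicity z := hmle
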